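/- Let H, G be groups with action φ: G → Aut(H), and define the subgroups L_n of H by L₁ = H, K_n = ⟨φ(g)(h)h⁻¹ : g ∈ Γ_{n−1}(G), h ∈ H⟩, H_n = ⟨φ(g)(h)h⁻¹ : g ∈ G, h ∈ L_{n−1}⟩, L_n = ⟨K_n, H_n, [H, L_{n−1}]⟩. Then for each n, the lower central series term of the semidirect product satisfies Γ_n(H ⋊_φ G) = L_n ⋊_φ Γ_n(G), where φ induces an action of Γ_n(G) on L_n. -/

import Mathlib

/-- The subgroups `L_n` of `H` from Theorem 1.2 of the paper (zero-based indexing, so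
`Lseries φ (n-1)` is the paper's `L_n`). -/
def Lseries {G H : Type*} [Group G] [Group H] (φ : G →* MulAut H) : ℕ → Subgroup H
  | 0 => ⊤
  | n + 1 =>
      Subgroup.closure {x : H | ∃ g ∈ (⊤ : Subgroup G).lowerCentralSeries n, ∃ h : H, x = φ g h * h⁻¹} ⊔
      Subgroup.closure {x : H | ∃ g : G, ∃ h ∈ Lseries φ n, x = φ g h * h⁻¹} ⊔
      ⁅(⊤ : Subgroup H), Lseries φ n⁆

namespace LcsSdpAux

open Subgroup SemidirectProduct
open scoped commutatorElement

variable {G H : Type*} [Group G] [Group H] (φ : G →* MulAut H)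

theorem Lseries_succ (n : ℕ) : Lseries φ (n + 1) =
    Subgroup.closure {x : H | ∃ g ∈ (⊤ : Subgroup G).lowerCentralSeries n, ∃ h : H, x = φ g h * h⁻¹} ⊔
    Subgroup.closure {x : H | ∃ g : G, ∃ h ∈ Lseries φ n, x = φ g h * h⁻¹} ⊔
    ⁅(⊤ : Subgroup H), Lseries φ n⁆ := rfl

theorem mem_K {n : ℕ} {g : G} (hg : g ∈ (⊤ : Subgroup G).lowerCentralSeries n) (h : H) :
    φ g h * h⁻¹ ∈ Lseries φ (n + 1) := by
  have hx : φ g h * h⁻¹ ∈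
      {x : H | ∃ g ∈ (⊤ : Subgroup G).lowerCentralSeries n, ∃ h : H, x = φ g h * h⁻¹} := ⟨g, hg, h, rfl⟩
  rw [Lseries_succ]
  exact SetLike.le_def.mp (le_sup_of_le_left le_sup_left) (subset_closure hx)

theorem mem_Hs {n : ℕ} (g : G) {h : H} (hh : h ∈ Lseries φ n) :
    φ g h * h⁻¹ ∈ Lseries φ (n + 1) := by
  have hx : φ g h * h⁻¹ ∈
      {x : H | ∃ g : G, ∃ h ∈ Lseries φ n, x = φ g h * h⁻¹} := ⟨g, h, hh, rfl⟩
  rw [Lseries_succ]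
  exact SetLike.le_def.mp (le_sup_of_le_left le_sup_right) (subset_closure hx)

theorem mem_comm {n : ℕ} (h : H) {a : H} (ha : a ∈ Lseries φ n) :
    ⁅h, a⁆ ∈ Lseries φ (n + 1) := by
  rw [Lseries_succ]
  exact SetLike.le_def.mp le_sup_right (commutator_mem_commutator (mem_top h) ha)

theorem Lseries_succ_le (n : ℕ) : Lseries φ (n + 1) ≤ Lseries φ n := by
  induction n with
  | zero => exact le_top
  | succ n ih =>
    rw [Lseries_succ, Lseries_succ]
    refine sup_le_sup (sup_le_sup (closure_mono ?_) (closure_mono ?_))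
      (Subgroup.commutator_mono le_rfl ih)
    · rintro x ⟨g, hg, h, rfl⟩
      exact ⟨g, Subgroup.lowerCentralSeries_antitone ⊤ (Nat.le_succ n) hg, h, rfl⟩
    · rintro x ⟨g, h, hh, rfl⟩
      exact ⟨g, h, ih hh, rfl⟩

theorem Lseries_inv (n : ℕ) (g : G) {h : H} (hh : h ∈ Lseries φ n) :
    φ g h ∈ Lseries φ n := by
  have h1 : φ g h * h⁻¹ ∈ Lseries φ n := Lseries_succ_le φ n (mem_Hs φ g hh)
  have : φ g h = (φ g h * h⁻¹) * h := by group
  rw [this]; exact mul_mem h1 hh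

theorem Lseries_conj (n : ℕ) (h : H) {a : H} (ha : a ∈ Lseries φ n) :
    h * a * h⁻¹ ∈ Lseries φ n := by
  have h1 : ⁅h, a⁆ ∈ Lseries φ n := Lseries_succ_le φ n (mem_comm φ h ha)
  have : h * a * h⁻¹ = ⁅h, a⁆ * a := by group
  rw [this]; exact mul_mem h1 ha

/-- The candidate subgroup of the semidirect product. -/
def P (n : ℕ) : Subgroup (H ⋊[φ] G) where
  carrier := {x | x.left ∈ Lseries φ n ∧ x.right ∈ (⊤ : Subgroup G).lowerCentralSeries n}
  one_mem' := ⟨by rw [one_left]; exact one_mem _, by rw [one_right]; exact one_mem _⟩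
  mul_mem' := by
    rintro a b ⟨ha1, ha2⟩ ⟨hb1, hb2⟩
    exact ⟨by rw [mul_left]; exact mul_mem ha1 (Lseries_inv φ n _ hb1),
      by rw [mul_right]; exact mul_mem ha2 hb2⟩
  inv_mem' := by
    rintro a ⟨h1, h2⟩
    exact ⟨by rw [inv_left]; exact Lseries_inv φ n _ (inv_mem h1),
      by rw [inv_right]; exact inv_mem h2⟩

theorem mem_P {n : ℕ} {x : H ⋊[φ] G} :
    x ∈ P φ n ↔ x.left ∈ Lseries φ n ∧ x.right ∈ (⊤ : Subgroup G).lowerCentralSeries n := Iff.rfl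

theorem sup_eq (n : ℕ) :
    (Lseries φ n).map inl ⊔ ((⊤ : Subgroup G).lowerCentralSeries n).map inr = P φ n := by
  apply le_antisymm
  · apply sup_le
    · rintro _ ⟨h, hh, rfl⟩
      exact ⟨by simpa using hh, by rw [right_inl]; exact one_mem _⟩
    · rintro _ ⟨g, hg, rfl⟩
      exact ⟨by rw [left_inr]; exact one_mem _, by simpa using hg⟩
  · rintro x ⟨h1, h2⟩
    rw [← inl_left_mul_inr_right x]
    exact mul_mem (mem_sup_left (mem_map_of_mem _ h1))
      (mem_sup_right (mem_map_of_mem _ h2))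

theorem inr_lcs_le (n : ℕ) :
    ((⊤ : Subgroup G).lowerCentralSeries n).map inr ≤ (⊤ : Subgroup (H ⋊[φ] G)).lowerCentralSeries n := by
  induction n with
  | zero => exact le_top
  | succ n ih =>
    show Subgroup.map inr ⁅(⊤ : Subgroup G).lowerCentralSeries n, ⊤⁆ ≤ ⁅(⊤ : Subgroup (H ⋊[φ] G)).lowerCentralSeries n, ⊤⁆
    rw [Subgroup.map_commutator]
    exact Subgroup.commutator_mono ih le_top

theorem comm_mem_P {n : ℕ} (x y : H ⋊[φ] G) (hx : x ∈ P φ n) :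
    ⁅x, y⁆ ∈ P φ (n + 1) := by
  obtain ⟨ha, hc⟩ := hx
  set a := x.left with ha'
  set c := x.right with hc'
  set h := y.left with hh'
  set g := y.right with hg'
  constructor
  · -- left component
    have key : (⁅x, y⁆).left = a * φ c h *
        φ (c * g * c⁻¹) a⁻¹ * φ (c * g * c⁻¹ * g⁻¹) h⁻¹ := by
      simp [commutatorElement_def, mul_left, inv_left, mul_right, inv_right, map_mul, mul_assoc, ha', hc', hh', hg']
    rw [key]
    have hcg : c * g * c⁻¹ * g⁻¹ ∈ (⊤ : Subgroup G).lowerCentralSeries n := by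
      have : ⁅c, g⁆ ∈ (⊤ : Subgroup G).lowerCentralSeries (n + 1) :=
        commutator_mem_commutator hc (mem_top g)
      exact Subgroup.lowerCentralSeries_antitone ⊤ (Nat.le_succ n) this
    have ht1 : φ c h * h⁻¹ ∈ Lseries φ (n + 1) := mem_K φ hc h
    have ht2 : φ (c * g * c⁻¹) a⁻¹ * a ∈ Lseries φ (n + 1) := by
      have := mem_Hs φ (c * g * c⁻¹) (inv_mem ha)
      simpa using this
    have ht3 : φ (c * g * c⁻¹ * g⁻¹) h⁻¹ * h ∈ Lseries φ (n + 1) := by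
      have := mem_K φ hcg h⁻¹
      simpa using this
    have hcomm : a * h * a⁻¹ * h⁻¹ ∈ Lseries φ (n + 1) := by
      have h1 : ⁅h, a⁆ ∈ Lseries φ (n + 1) := mem_comm φ h ha
      have : a * h * a⁻¹ * h⁻¹ = ⁅h, a⁆⁻¹ := by group
      rw [this]; exact inv_mem h1
    have e : a * φ c h * φ (c * g * c⁻¹) a⁻¹ * φ (c * g * c⁻¹ * g⁻¹) h⁻¹ =
        (a * (φ c h * h⁻¹) * a⁻¹) *
        (a * (h * (φ (c * g * c⁻¹) a⁻¹ * a) * h⁻¹) * a⁻¹) *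
        (a * h * a⁻¹ * h⁻¹) *
        (h * (φ (c * g * c⁻¹ * g⁻¹) h⁻¹ * h) * h⁻¹) := by group
    rw [e]
    exact mul_mem (mul_mem (mul_mem
      (Lseries_conj φ _ a ht1)
      (Lseries_conj φ _ a (Lseries_conj φ _ h ht2)))
      hcomm)
      (Lseries_conj φ _ h ht3)
  · -- right component
    have key : (⁅x, y⁆).right = ⁅c, g⁆ := by
      simp [commutatorElement_def, mul_right, inv_right, hc', hg']
    rw [key]
    exact commutator_mem_commutator hc (mem_top g)

end LcsSdpAux

/-- Theorem 1.2(1): `Γ_n(H ⋊_φ G) = L_n ⋊_φ Γ_n(G)`, where `φ` induces an action of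
`Γ_n(G)` on `L_n` (both sides viewed as subgroups of the semidirect product, the right-hand
side being generated by the images of `L_n` and `Γ_n(G)`). -/
theorem lowerCentralSeries_semidirectProduct {G H : Type*} [Group G] [Group H]
    (φ : G →* MulAut H) :
    ∀ n : ℕ,
      (∀ g ∈ (⊤ : Subgroup G).lowerCentralSeries n, ∀ h ∈ Lseries φ n, φ g h ∈ Lseries φ n) ∧
      (⊤ : Subgroup (H ⋊[φ] G)).lowerCentralSeries n =
        (Lseries φ n).map SemidirectProduct.inl ⊔
          ((⊤ : Subgroup G).lowerCentralSeries n).map SemidirectProduct.inr := by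
  open Subgroup SemidirectProduct LcsSdpAux commutatorElement in
  intro n
  refine ⟨fun g _ h hh => Lseries_inv φ n g hh, ?_⟩
  induction n with
  | zero =>
    rw [sup_eq]
    apply le_antisymm _ le_top
    intro x _
    exact ⟨mem_top _, mem_top _⟩
  | succ n ih =>
    rw [sup_eq]
    apply le_antisymm
    · show ⁅(⊤ : Subgroup (H ⋊[φ] G)).lowerCentralSeries n, ⊤⁆ ≤ P φ (n + 1)
      rw [Subgroup.commutator_le]
      intro x hx y _
      rw [ih, sup_eq] at hx
      exact comm_mem_P φ x y hx
    · rw [← sup_eq]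
      apply sup_le
      · rw [Lseries_succ, Subgroup.map_sup, Subgroup.map_sup]
        refine sup_le (sup_le ?_ ?_) ?_
        · rw [MonoidHom.map_closure]
          rw [Subgroup.closure_le]
          rintro _ ⟨x, ⟨g, hg, h, rfl⟩, rfl⟩
          have e : (inl (φ g h * h⁻¹) : H ⋊[φ] G) = ⁅(inr g : H ⋊[φ] G), inl h⁆ := by
            simp [commutatorElement_def, inl_aut, map_mul, mul_assoc]
          have hinr : (inr g : H ⋊[φ] G) ∈ (⊤ : Subgroup (H ⋊[φ] G)).lowerCentralSeries n := by
            rw [ih]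
            exact mem_sup_right (mem_map_of_mem _ hg)
          rw [SetLike.mem_coe]
          show (inl (φ g h * h⁻¹) : H ⋊[φ] G) ∈ ⁅(⊤ : Subgroup (H ⋊[φ] G)).lowerCentralSeries n, ⊤⁆
          rw [e]
          exact commutator_mem_commutator hinr (mem_top _)
        · rw [MonoidHom.map_closure]
          rw [Subgroup.closure_le]
          rintro _ ⟨x, ⟨g, h, hh, rfl⟩, rfl⟩
          have e : (inl (φ g h * h⁻¹) : H ⋊[φ] G) = ⁅(inl h : H ⋊[φ] G), inr g⁆⁻¹ := by
            rw [commutatorElement_inv]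
            simp [commutatorElement_def, inl_aut, map_mul, mul_assoc]
          have hinl : (inl h : H ⋊[φ] G) ∈ (⊤ : Subgroup (H ⋊[φ] G)).lowerCentralSeries n := by
            rw [ih]
            exact mem_sup_left (mem_map_of_mem _ hh)
          rw [SetLike.mem_coe]
          show (inl (φ g h * h⁻¹) : H ⋊[φ] G) ∈ ⁅(⊤ : Subgroup (H ⋊[φ] G)).lowerCentralSeries n, ⊤⁆
          rw [e]
          exact inv_mem (commutator_mem_commutator hinl (mem_top _))
        · rw [Subgroup.map_commutator]
          show _ ≤ ⁅(⊤ : Subgroup (H ⋊[φ] G)).lowerCentralSeries n, ⊤⁆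
          rw [Subgroup.commutator_comm]
          refine Subgroup.commutator_mono ?_ le_top
          rw [ih]
          exact le_sup_left
      · exact inr_lcs_le φ (n + 1)
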